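/- Let p ≥ 3 be a prime and L a 3-dimensional ℤ_p-Lie lattice with a basis (x_0,x_1,x_2) in which the bracket is [x_1,x_2] = p^{s_0} x_0, [x_2,x_0] = p^{s_0} x_1, [x_0,x_1] = p^{s_0} x_2 for some s_0 ∈ ℕ (i.e., p^{s_0}·sl_2-type canonical form with identity matrix scaled by p^{s_0}). Then L admits a simple virtual endomorphism of index p; that is, L is self-similar of index p. -/

import Mathlib

open Polynomial in
lemma stmt19_sq (p : ℕ) [Fact p.Prime] (hp3 : 3 ≤ p) :
    ∃ α β : ℤ_[p], α ^ 2 + β ^ 2 = -1 := by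
  have hp : p.Prime := Fact.out
  have hm1 : (-1 : ZMod p) ≠ 0 := by
    simp only [ne_eq, neg_eq_zero]
    exact one_ne_zero
  obtain ⟨a, b, hab, ha⟩ : ∃ a b : ZMod p, a ^ 2 + b ^ 2 = -1 ∧ a ≠ 0 := by
    obtain ⟨a, b, hab⟩ := ZMod.sq_add_sq p (-1)
    rcases eq_or_ne a 0 with h | h
    · refine ⟨b, a, by rw [add_comm]; exact hab, ?_⟩
      rintro rfl
      rw [h] at hab
      simp only [ne_eq, OfNat.ofNat_ne_zero, not_false_eq_true, zero_pow, add_zero,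
        zero_add] at hab
      exact hm1 (by linear_combination -hab)
    · exact ⟨a, b, hab, h⟩
  set α₀ : ℤ_[p] := (a.val : ℤ_[p]) with hα₀
  set β₀ : ℤ_[p] := (b.val : ℤ_[p]) with hβ₀
  have htoa : PadicInt.toZMod α₀ = a := by
    rw [hα₀, map_natCast, ZMod.natCast_rightInverse a]
  have htob : PadicInt.toZMod β₀ = b := by
    rw [hβ₀, map_natCast, ZMod.natCast_rightInverse b]
  have hker : ∀ z : ℤ_[p], PadicInt.toZMod z = 0 ↔ (p : ℤ_[p]) ∣ z := by
    intro z
    rw [← RingHom.mem_ker, PadicInt.ker_toZMod, PadicInt.maximalIdeal_eq_span_p,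
      Ideal.mem_span_singleton]
  set F : Polynomial ℤ_[p] := X ^ 2 + C (β₀ ^ 2 + 1) with hF
  have hev : F.eval α₀ = α₀ ^ 2 + β₀ ^ 2 + 1 := by simp [hF]; ring
  have hder : F.derivative.eval α₀ = 2 * α₀ := by
    rw [hF, derivative_add, derivative_C, derivative_X_pow]
    norm_num
  have hnorm1 : ‖F.derivative.eval α₀‖ = 1 := by
    rw [hder]
    rcases (PadicInt.norm_le_one (2 * α₀)).lt_or_eq with h | h
    · exfalso
      rw [PadicInt.norm_lt_one_iff_dvd, ← hker] at h
      rw [map_mul, htoa] at h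
      have h2 : (PadicInt.toZMod (2 : ℤ_[p]) : ZMod p) = 2 := by
        rw [show ((2:ℤ_[p])) = ((2:ℕ) : ℤ_[p]) by norm_num, map_natCast]; norm_num
      rw [h2] at h
      have h2z : (2 : ZMod p) ≠ 0 := by
        have h2n : ((2:ℕ) : ZMod p) ≠ 0 := by
          rw [Ne, ZMod.natCast_eq_zero_iff]
          intro hd
          have := Nat.le_of_dvd (by norm_num) hd
          omega
        simpa using h2n
      exact (mul_ne_zero h2z ha) h
    · exact h.symm ▸ rfl
  have hnormF : ‖F.eval α₀‖ < ‖F.derivative.eval α₀‖ ^ 2 := by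
    rw [hnorm1, one_pow, hev, PadicInt.norm_lt_one_iff_dvd, ← hker]
    simp only [map_add, map_pow, map_one, htoa, htob]
    linear_combination hab
  obtain ⟨z, hz, -⟩ := hensels_lemma hnormF
  refine ⟨z, β₀, ?_⟩
  have : z ^ 2 + (β₀ ^ 2 + 1) = 0 := by simpa [hF] using hz
  linear_combination this


lemma stmt19_zero (p : ℕ) [Fact p.Prime] (x : ℤ_[p]) (h : ∀ k : ℕ, (p:ℤ_[p])^k ∣ x) :
    x = 0 := by
  have hp : p.Prime := Fact.out
  by_contra hx
  have hp1 : (1:ℝ) < (p:ℝ) := by exact_mod_cast hp.one_lt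
  obtain ⟨k, hk⟩ := exists_pow_lt_of_lt_one (norm_pos_iff.mpr hx)
    (inv_lt_one_of_one_lt₀ hp1)
  have hnorm : ‖x‖ ≤ (p:ℝ) ^ (-(k:ℤ)) := by
    rw [PadicInt.norm_le_pow_iff_mem_span_pow, Ideal.mem_span_singleton]
    exact h k
  have : ((p:ℝ)⁻¹) ^ k = (p:ℝ) ^ (-(k:ℤ)) := by
    rw [inv_pow, ← zpow_natCast, ← zpow_neg]
  rw [this] at hk
  exact absurd (lt_of_le_of_lt hnorm hk) (lt_irrefl _)

set_option maxHeartbeats 1000000 in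
theorem stmt19 (p : ℕ) [Fact p.Prime] (hp3 : 3 ≤ p) {L : Type*} [AddCommGroup L]
    [Module ℤ_[p] L]
    (f : L →ₗ[ℤ_[p]] L →ₗ[ℤ_[p]] L) (hanti : ∀ z : L, f z z = 0)
    (hjacobi : ∀ x y z : L, f (f x y) z + f (f z x) y + f (f y z) x = 0)
    (b : Module.Basis (Fin 3) ℤ_[p] L) (s₀ : ℕ)
    (hbr : f (b 1) (b 2) = (p : ℤ_[p]) ^ s₀ • b 0 ∧
           f (b 2) (b 0) = (p : ℤ_[p]) ^ s₀ • b 1 ∧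
           f (b 0) (b 1) = (p : ℤ_[p]) ^ s₀ • b 2) :
    -- `L` is self-similar of index `p`: it admits a simple virtual endomorphism of index `p`
    ∃ M : Submodule ℤ_[p] L,
      (∀ a ∈ M, ∀ c ∈ M, f a c ∈ M) ∧
      M.toAddSubgroup.index = p ∧
      ∃ φ : M →ₗ[ℤ_[p]] L,
        (∀ u v : M, ∀ h : f u v ∈ M, φ ⟨f u v, h⟩ = f (φ u) (φ v)) ∧
        ∀ I : Submodule ℤ_[p] L, (∀ z : L, ∀ y ∈ I, f z y ∈ I) →
          ∀ hle : I ≤ M, (∀ y (hy : y ∈ I), φ ⟨y, hle hy⟩ ∈ I) → I = ⊥ := by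
  classical
  have hp : p.Prime := Fact.out
  obtain ⟨α, β, hαβ⟩ := stmt19_sq p hp3
  obtain ⟨h12, h20, h01⟩ := hbr
  set x0 : L := b 0 with hx0def
  set x1 : L := b 1 with hx1def
  set x2 : L := b 2 with hx2def
  set P : ℤ_[p] := (p : ℤ_[p]) ^ s₀ with hPdef
  have hp0 : (p : ℤ_[p]) ≠ 0 := Nat.cast_ne_zero.mpr hp.ne_zero
  have hP0 : P ≠ 0 := pow_ne_zero _ hp0
  -- skew symmetry
  have hsk : ∀ u v : L, f u v = - f v u := by
    intro u v
    have h := hanti (u + v)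
    simp only [map_add, LinearMap.add_apply, hanti, zero_add, add_zero] at h
    first
      | exact eq_neg_of_add_eq_zero_left h
      | exact eq_neg_of_add_eq_zero_right h
  have h10 : f x1 x0 = -(P • x2) := by rw [hsk, h01]
  have h02 : f x0 x2 = -(P • x1) := by rw [hsk, h20]
  have h21 : f x2 x1 = -(P • x0) := by rw [hsk, h12]
  -- vectors
  set e : L := x0 + α • x1 + β • x2 with hedef
  set m : L := (-β) • x1 + α • x2 with hmdef
  -- bracket table on x0, e, m
  have fx0x0 : f x0 x0 = 0 := hanti x0
  have fee : f e e = 0 := hanti e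
  have fmm : f m m = 0 := hanti m
  have fx0e : f x0 e = P • m := by
    rw [hedef, hmdef]
    simp only [map_add, map_smul, h01, h02, fx0x0]
    module
  have fx0m : f x0 m = P • x0 - P • e := by
    rw [hmdef, hedef]
    simp only [map_add, map_smul, h01, h02]
    module
  have fem : f e m = -(P • e) := by
    rw [hedef, hmdef]
    simp only [map_add, map_smul, LinearMap.add_apply, LinearMap.smul_apply,
      h01, h02, h12, h10, h21, hanti]
    match_scalars <;>
      first
        | ring1
        | linear_combination ((p:ℤ_[p])^s₀) * hαβ
        | linear_combination (-((p:ℤ_[p])^s₀)) * hαβ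
  have fex0 : f e x0 = -(P • m) := by rw [hsk, fx0e]
  have fmx0 : f m x0 = P • e - P • x0 := by rw [hsk, fx0m]; module
  have fme : f m e = P • e := by rw [hsk, fem]; module
  -- coordinate functionals
  set θ : L →ₗ[ℤ_[p]] ℤ_[p] := b.coord 0 + α • b.coord 1 + β • b.coord 2 with hθdef
  set B : L →ₗ[ℤ_[p]] ℤ_[p] := (-α) • b.coord 1 + (-β) • b.coord 2 with hBdef
  set C : L →ₗ[ℤ_[p]] ℤ_[p] := β • b.coord 1 + (-α) • b.coord 2 with hCdef
  have hcoord : ∀ (i j : Fin 3), b.coord i (b j) = if j = i then 1 else 0 := by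
    intro i j
    simp [Module.Basis.coord_apply, Module.Basis.repr_self, Finsupp.single_apply]
  have hθ0 : θ x0 = 1 := by
    rw [hθdef]
    simp [LinearMap.add_apply, LinearMap.smul_apply, hx0def, hcoord]
  have hθ1 : θ x1 = α := by
    rw [hθdef]
    simp [LinearMap.add_apply, LinearMap.smul_apply, hx1def, hcoord]
  have hθ2 : θ x2 = β := by
    rw [hθdef]
    simp [LinearMap.add_apply, LinearMap.smul_apply, hx2def, hcoord]
  have hB0 : B x0 = 0 := by
    rw [hBdef]; simp [LinearMap.add_apply, LinearMap.smul_apply, hx0def, hcoord]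
  have hB1 : B x1 = -α := by
    rw [hBdef]; simp [LinearMap.add_apply, LinearMap.smul_apply, hx1def, hcoord]
  have hB2 : B x2 = -β := by
    rw [hBdef]; simp [LinearMap.add_apply, LinearMap.smul_apply, hx2def, hcoord]
  have hC0 : C x0 = 0 := by
    rw [hCdef]; simp [LinearMap.add_apply, LinearMap.smul_apply, hx0def, hcoord]
  have hC1 : C x1 = β := by
    rw [hCdef]; simp [LinearMap.add_apply, LinearMap.smul_apply, hx1def, hcoord]
  have hC2 : C x2 = -α := by
    rw [hCdef]; simp [LinearMap.add_apply, LinearMap.smul_apply, hx2def, hcoord]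
  have hθe : θ e = 0 := by
    rw [hedef]
    simp only [map_add, map_smul, hθ0, hθ1, hθ2, smul_eq_mul]
    linear_combination hαβ
  have hθm : θ m = 0 := by
    rw [hmdef]
    simp only [map_add, map_smul, hθ1, hθ2, smul_eq_mul]
    ring
  have hBe : B e = 1 := by
    rw [hedef]
    simp only [map_add, map_smul, hB0, hB1, hB2, smul_eq_mul]
    linear_combination -hαβ
  have hBm : B m = 0 := by
    rw [hmdef]
    simp only [map_add, map_smul, hB1, hB2, smul_eq_mul]
    ring
  have hCe : C e = 0 := by
    rw [hedef]
    simp only [map_add, map_smul, hC0, hC1, hC2, smul_eq_mul]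
    ring
  have hCm : C m = 1 := by
    rw [hmdef]
    simp only [map_add, map_smul, hC1, hC2, smul_eq_mul]
    linear_combination -hαβ
  -- decomposition
  have hD : ∀ v : L, θ v • x0 + B v • e + C v • m = v := by
    intro v
    obtain ⟨r0, r1, r2, rfl⟩ : ∃ r0 r1 r2 : ℤ_[p], v = r0 • x0 + r1 • x1 + r2 • x2 := by
      refine ⟨b.repr v 0, b.repr v 1, b.repr v 2, ?_⟩
      have hv := b.sum_repr v
      rw [Fin.sum_univ_three] at hv
      exact hv.symm
    simp only [map_add, map_smul, hθ0, hθ1, hθ2, hB0, hB1, hB2, hC0, hC1, hC2, smul_eq_mul]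
    rw [hedef, hmdef]
    match_scalars <;>
      first
        | ring1
        | linear_combination (-r1) * hαβ
        | linear_combination (-r2) * hαβ
  -- master expansion
  have fexp : ∀ a₁ b₁ c₁ a₂ b₂ c₂ : ℤ_[p],
      f (a₁ • x0 + b₁ • e + c₁ • m) (a₂ • x0 + b₂ • e + c₂ • m)
        = (P * (a₁ * c₂ - c₁ * a₂)) • x0
          + (P * (c₁ * a₂ - a₁ * c₂) - P * (b₁ * c₂ - c₁ * b₂)) • e
          + (P * (a₁ * b₂ - b₁ * a₂)) • m := by
    intro a₁ b₁ c₁ a₂ b₂ c₂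
    simp only [map_add, map_smul, LinearMap.add_apply, LinearMap.smul_apply,
      fx0x0, fx0e, fx0m, fex0, fee, fem, fmx0, fme, fmm, smul_zero, add_zero, zero_add]
    module
  have compθ : ∀ a₁ b₁ c₁ : ℤ_[p], θ (a₁ • x0 + b₁ • e + c₁ • m) = a₁ := by
    intro a₁ b₁ c₁
    simp only [map_add, map_smul, hθ0, hθe, hθm, smul_eq_mul]
    ring
  have compB : ∀ a₁ b₁ c₁ : ℤ_[p], B (a₁ • x0 + b₁ • e + c₁ • m) = b₁ := by
    intro a₁ b₁ c₁
    simp only [map_add, map_smul, hB0, hBe, hBm, smul_eq_mul]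
    ring
  have compC : ∀ a₁ b₁ c₁ : ℤ_[p], C (a₁ • x0 + b₁ • e + c₁ • m) = c₁ := by
    intro a₁ b₁ c₁
    simp only [map_add, map_smul, hC0, hCe, hCm, smul_eq_mul]
    ring
  have fkeyθ : ∀ u v : L, θ (f u v) = P * (θ u * C v - C u * θ v) := by
    intro u v
    conv_lhs => rw [← hD u, ← hD v, fexp, compθ]
  have fkeyB : ∀ u v : L,
      B (f u v) = P * (C u * θ v - θ u * C v) - P * (B u * C v - C u * B v) := by
    intro u v
    conv_lhs => rw [← hD u, ← hD v, fexp, compB]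
  have fkeyC : ∀ u v : L, C (f u v) = P * (θ u * B v - B u * θ v) := by
    intro u v
    conv_lhs => rw [← hD u, ← hD v, fexp, compC]
  -- the submodule M
  set M : Submodule ℤ_[p] L := Submodule.comap θ (Ideal.span {(p : ℤ_[p])}) with hMdef
  have hmemM : ∀ v : L, v ∈ M ↔ (p : ℤ_[p]) ∣ θ v := by
    intro v
    rw [hMdef, Submodule.mem_comap, Ideal.mem_span_singleton]
  -- closure under the bracket
  have hclosed : ∀ a ∈ M, ∀ c ∈ M, f a c ∈ M := by
    intro u hu w hw
    rw [hmemM] at hu hw ⊢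
    obtain ⟨t, ht⟩ := hu
    obtain ⟨r, hr⟩ := hw
    rw [fkeyθ, ht, hr]
    exact ⟨P * (t * C w - C u * r), by ring⟩
  -- index
  have hker2 : ∀ z : ℤ_[p], PadicInt.toZMod z = 0 ↔ (p : ℤ_[p]) ∣ z := by
    intro z
    rw [← RingHom.mem_ker, PadicInt.ker_toZMod, PadicInt.maximalIdeal_eq_span_p,
      Ideal.mem_span_singleton]
  set ψ : L →+ ZMod p :=
    (PadicInt.toZMod : ℤ_[p] →+* ZMod p).toAddMonoidHom.comp θ.toAddMonoidHom with hψdef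
  have hψap : ∀ v : L, ψ v = PadicInt.toZMod (θ v) := fun v => rfl
  have hψsurj : Function.Surjective ψ := by
    intro c
    refine ⟨(c.val : ℤ_[p]) • x0, ?_⟩
    rw [hψap, map_smul, hθ0, smul_eq_mul, mul_one, map_natCast, ZMod.natCast_rightInverse c]
  have hψker : ψ.ker = M.toAddSubgroup := by
    ext v
    rw [AddMonoidHom.mem_ker, hψap, hker2, Submodule.mem_toAddSubgroup, hmemM]
  have hindex : M.toAddSubgroup.index = p := by
    rw [AddSubgroup.index_eq_card, ← hψker,
      Nat.card_congr (QuotientAddGroup.quotientKerEquivOfSurjective ψ hψsurj).toEquiv,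
      Nat.card_zmod]
  -- the map π = θ / p on M
  have hπex : ∀ v : M, ∃ t : ℤ_[p], θ (v : L) = (p : ℤ_[p]) * t := by
    intro v
    obtain ⟨t, ht⟩ := (hmemM (v : L)).mp v.2
    exact ⟨t, ht⟩
  choose π hπspec using hπex
  have hπadd : ∀ u v : M, π (u + v) = π u + π v := by
    intro u v
    apply mul_left_cancel₀ hp0
    rw [← hπspec (u + v), Submodule.coe_add, map_add, hπspec u, hπspec v]
    ring
  have hπsmul : ∀ (r : ℤ_[p]) (v : M), π (r • v) = r * π v := by
    intro r v
    apply mul_left_cancel₀ hp0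
    rw [← hπspec (r • v), Submodule.coe_smul, map_smul, smul_eq_mul, hπspec v]
    ring
  -- the constant δ with 2δ = p² - 1
  have hpodd : p % 2 = 1 := (hp.eq_two_or_odd).resolve_left (by omega)
  have hsq : p ^ 2 % 2 = 1 := by rw [Nat.pow_mod, hpodd]
  have hδnat : 2 * ((p ^ 2 - 1) / 2) = p ^ 2 - 1 := by omega
  have hp2ge : 1 ≤ p ^ 2 := by nlinarith
  set δ : ℤ_[p] := (((p ^ 2 - 1) / 2 : ℕ) : ℤ_[p]) with hδdef
  have hδ : 2 * δ = (p : ℤ_[p]) ^ 2 - 1 := by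
    rw [hδdef, show (2 : ℤ_[p]) = ((2 : ℕ) : ℤ_[p]) by norm_num, ← Nat.cast_mul, hδnat,
      Nat.cast_sub hp2ge, Nat.cast_pow, Nat.cast_one]
  -- the virtual endomorphism φ
  set φ : M →ₗ[ℤ_[p]] L :=
    { toFun := fun v => π v • x0 + (π v * δ + (p : ℤ_[p]) * B (v : L)) • e + C (v : L) • m
      map_add' := by
        intro u v
        simp only [hπadd, Submodule.coe_add, map_add]
        module
      map_smul' := by
        intro r v
        simp only [hπsmul, Submodule.coe_smul, map_smul, RingHom.id_apply, smul_eq_mul]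
        module } with hφdef
  have hφap : ∀ v : M,
      φ v = π v • x0 + (π v * δ + (p : ℤ_[p]) * B (v : L)) • e + C (v : L) • m := fun v => rfl
  have hθφ : ∀ v : M, θ (φ v) = π v := by
    intro v
    rw [hφap, compθ]
  -- morphism property
  have hmorph : ∀ u v : M, ∀ h : f (u : L) (v : L) ∈ M,
      φ ⟨f (u : L) (v : L), h⟩ = f (φ u) (φ v) := by
    intro u v h
    have hw : π ⟨f (u : L) (v : L), h⟩ = P * (π u * C (v : L) - C (u : L) * π v) := by
      apply mul_left_cancel₀ hp0
      rw [← hπspec ⟨f (u : L) (v : L), h⟩]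
      show θ (f (u : L) (v : L)) = _
      rw [fkeyθ, hπspec u, hπspec v]
      ring
    have hBw : B ((⟨f (u : L) (v : L), h⟩ : M) : L)
        = P * (C (u : L) * θ (v : L) - θ (u : L) * C (v : L))
          - P * (B (u : L) * C (v : L) - C (u : L) * B (v : L)) := fkeyB _ _
    have hCw : C ((⟨f (u : L) (v : L), h⟩ : M) : L)
        = P * (θ (u : L) * B (v : L) - B (u : L) * θ (v : L)) := fkeyC _ _
    rw [hφap, hφap u, hφap v, fexp, hw, hBw, hCw, hπspec u, hπspec v]
    match_scalars <;>
      first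
        | ring1
        | linear_combination (P * (π u * C (v : L) - C (u : L) * π v)) * hδ
        | linear_combination (P * (π u * C (v : L) - C (u : L) * π v) * α) * hδ
        | linear_combination (P * (π u * C (v : L) - C (u : L) * π v) * β) * hδ
  -- simplicity
  have hsimple : ∀ I : Submodule ℤ_[p] L, (∀ z : L, ∀ y ∈ I, f z y ∈ I) →
      ∀ hle : I ≤ M, (∀ y (hy : y ∈ I), φ ⟨y, hle hy⟩ ∈ I) → I = ⊥ := by
    intro I hI hle hinv
    have hθI : ∀ v ∈ I, θ v = 0 := by
      intro v hv
      have hdvd : ∀ k : ℕ, ∃ w, w ∈ I ∧ (p : ℤ_[p]) ^ k * θ w = θ v := by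
        intro k
        induction k with
        | zero => exact ⟨v, hv, by rw [pow_zero, one_mul]⟩
        | succ n ih =>
          obtain ⟨w, hw, hwe⟩ := ih
          refine ⟨φ ⟨w, hle hw⟩, hinv w hw, ?_⟩
          rw [hθφ ⟨w, hle hw⟩, pow_succ, mul_assoc,
            ← hπspec ⟨w, hle hw⟩]
          exact hwe
      apply stmt19_zero p
      intro k
      obtain ⟨w, hw, hwe⟩ := hdvd k
      exact ⟨θ w, hwe.symm⟩
    have hCI : ∀ v ∈ I, C v = 0 := by
      intro v hv
      have h1 : θ (f x0 v) = 0 := hθI _ (hI x0 v hv)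
      rw [fkeyθ, hθ0, hC0, hθI v hv] at h1
      have h2 : P * C v = 0 := by linear_combination h1
      rcases mul_eq_zero.mp h2 with h | h
      · exact absurd h hP0
      · exact h
    have hBI : ∀ v ∈ I, B v = 0 := by
      intro v hv
      have h1 : C (f x0 v) = 0 := hCI _ (hI x0 v hv)
      rw [fkeyC, hθ0, hB0, hθI v hv] at h1
      have h2 : P * B v = 0 := by linear_combination h1
      rcases mul_eq_zero.mp h2 with h | h
      · exact absurd h hP0
      · exact h
    rw [eq_bot_iff]
    intro v hv
    rw [Submodule.mem_bot]
    rw [← hD v, hθI v hv, hBI v hv, hCI v hv]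
    simp
  exact ⟨M, hclosed, hindex, φ, hmorph, hsimple⟩
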